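/- Let B be a normed vector space, G a group, and π : G → L(B, B) a group homomorphism into the bounded linear operators on B with ‖π(g)‖ ≤ 1 for all g ∈ G. Let F_N and F_K be nonempty finite subsets of G and η > 0, and assume that for every h ∈ F_N one has |F_K Δ hF_K| < η·|F_K|. Define A_N x := (1/|F_N|) Σ_{g ∈ F_N} π(g⁻¹) x and A_K x := (1/|F_K|) Σ_{g ∈ F_K} π(g⁻¹) x. Then for every x ∈ B, ‖A_K x − A_K (A_N x)‖ ≤ η ‖x‖. -/

import Mathlib

open Pointwise

/-- Discrete averaging lemma: if every `h ∈ F_N` moves `F_K` by less than `η·|F_K|`, then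
`‖A_K x − A_K A_N x‖ ≤ η‖x‖`. -/
theorem stmt_14 {B : Type*} [NormedAddCommGroup B] [NormedSpace ℝ B]
    {G : Type*} [Group G] [DecidableEq G]
    (π : G →* (B →L[ℝ] B)) (hπ : ∀ g : G, ‖π g‖ ≤ 1)
    (FN FK : Finset G) (hFN : FN.Nonempty) (hFK : FK.Nonempty)
    (η : ℝ) (hη : 0 < η)
    (hfolner : ∀ h ∈ FN, ((symmDiff FK (h • FK)).card : ℝ) < η * FK.card)
    (x : B) :
    ‖((FK.card : ℝ)⁻¹ • ∑ g ∈ FK, π g⁻¹ x) -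
      ((FK.card : ℝ)⁻¹ • ∑ g ∈ FK, π g⁻¹ ((FN.card : ℝ)⁻¹ • ∑ h ∈ FN, π h⁻¹ x))‖
      ≤ η * ‖x‖ := by
  have hc : (0:ℝ) < FK.card := by exact_mod_cast hFK.card_pos
  have hn : (0:ℝ) < FN.card := by exact_mod_cast hFN.card_pos
  set f : G → B := fun g => π g⁻¹ x with hf
  have hfb : ∀ g : G, ‖f g‖ ≤ ‖x‖ := by
    intro g
    calc ‖f g‖ ≤ ‖π g⁻¹‖ * ‖x‖ := (π g⁻¹).le_opNorm x
    _ ≤ 1 * ‖x‖ := mul_le_mul_of_nonneg_right (hπ g⁻¹) (norm_nonneg x)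
    _ = ‖x‖ := one_mul _
  have sbound : ∀ S : Finset G, ‖∑ g ∈ S, f g‖ ≤ (S.card : ℝ) * ‖x‖ := by
    intro S
    calc ‖∑ g ∈ S, f g‖ ≤ ∑ _g ∈ S, ‖x‖ := norm_sum_le_of_le _ (fun g _ => hfb g)
    _ = (S.card : ℝ) * ‖x‖ := by rw [Finset.sum_const, nsmul_eq_mul]
  have key : ∀ h ∈ FN,
      ‖((FK.card : ℝ)⁻¹ • ∑ g ∈ FK, f g) - ((FK.card : ℝ)⁻¹ • ∑ g ∈ FK, f (h * g))‖
        ≤ η * ‖x‖ := by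
    intro h hh
    have hre : ∑ g ∈ FK, f (h * g) = ∑ g ∈ h • FK, f g := by
      rw [Finset.smul_finset_def,
        Finset.sum_image (by intros a _ b _; exact fun e => mul_left_cancel e)]
      rfl
    rw [hre, ← smul_sub, ← Finset.sum_sdiff_sub_sum_sdiff]
    have hcardΔ : ((symmDiff FK (h • FK)).card : ℝ)
        = ((FK \ (h • FK)).card : ℝ) + (((h • FK) \ FK).card : ℝ) := by
      have hdisj : Disjoint (FK \ (h • FK)) ((h • FK) \ FK) :=
        Finset.sdiff_disjoint.mono_right Finset.sdiff_subset
      rw [symmDiff_def, Finset.sup_eq_union, Finset.card_union_of_disjoint hdisj]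
      push_cast
      ring
    have hb1 : ‖∑ g ∈ FK \ (h • FK), f g - ∑ g ∈ (h • FK) \ FK, f g‖
        ≤ ((symmDiff FK (h • FK)).card : ℝ) * ‖x‖ := by
      calc ‖∑ g ∈ FK \ (h • FK), f g - ∑ g ∈ (h • FK) \ FK, f g‖
          ≤ ‖∑ g ∈ FK \ (h • FK), f g‖ + ‖∑ g ∈ (h • FK) \ FK, f g‖ := norm_sub_le _ _
      _ ≤ ((FK \ (h • FK)).card : ℝ) * ‖x‖ + (((h • FK) \ FK).card : ℝ) * ‖x‖ :=
          add_le_add (sbound _) (sbound _)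
      _ = ((symmDiff FK (h • FK)).card : ℝ) * ‖x‖ := by rw [hcardΔ, add_mul]
    rw [norm_smul, norm_inv, Real.norm_natCast]
    have hΔ := hfolner h hh
    have hxnn := norm_nonneg x
    have : ‖∑ g ∈ FK \ (h • FK), f g - ∑ g ∈ (h • FK) \ FK, f g‖
        ≤ η * (FK.card : ℝ) * ‖x‖ := by
      refine hb1.trans ?_
      exact mul_le_mul_of_nonneg_right hΔ.le hxnn
    calc ((FK.card : ℝ))⁻¹ * ‖∑ g ∈ FK \ (h • FK), f g - ∑ g ∈ (h • FK) \ FK, f g‖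
        ≤ ((FK.card : ℝ))⁻¹ * (η * (FK.card : ℝ) * ‖x‖) :=
          mul_le_mul_of_nonneg_left this (inv_nonneg.2 hc.le)
    _ = η * ‖x‖ := by field_simp
  have h2 : ∀ g : G, π g⁻¹ ((FN.card : ℝ)⁻¹ • ∑ h ∈ FN, π h⁻¹ x)
      = (FN.card : ℝ)⁻¹ • ∑ h ∈ FN, f (h * g) := by
    intro g
    rw [map_smul, map_sum]
    congr 1
    refine Finset.sum_congr rfl fun h _ => ?_
    simp only [hf, mul_inv_rev, map_mul]
    rfl
  have expand :
      ((FK.card : ℝ)⁻¹ • ∑ g ∈ FK, π g⁻¹ x) -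
        ((FK.card : ℝ)⁻¹ • ∑ g ∈ FK, π g⁻¹ ((FN.card : ℝ)⁻¹ • ∑ h ∈ FN, π h⁻¹ x))
      = (FN.card : ℝ)⁻¹ • ∑ h ∈ FN,
          (((FK.card : ℝ)⁻¹ • ∑ g ∈ FK, f g) - ((FK.card : ℝ)⁻¹ • ∑ g ∈ FK, f (h * g))) := by
    rw [Finset.sum_sub_distrib, smul_sub, Finset.sum_const]
    congr 1
    · rw [← Nat.cast_smul_eq_nsmul ℝ, smul_smul, inv_mul_cancel₀ hn.ne', one_smul]
    · simp only [h2]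
      simp only [Finset.smul_sum, smul_smul]
      rw [Finset.sum_comm]
      simp [mul_comm]
  rw [expand]
  calc ‖(FN.card : ℝ)⁻¹ • ∑ h ∈ FN,
          (((FK.card : ℝ)⁻¹ • ∑ g ∈ FK, f g) - ((FK.card : ℝ)⁻¹ • ∑ g ∈ FK, f (h * g)))‖
      = ((FN.card : ℝ))⁻¹ * ‖∑ h ∈ FN,
          (((FK.card : ℝ)⁻¹ • ∑ g ∈ FK, f g) - ((FK.card : ℝ)⁻¹ • ∑ g ∈ FK, f (h * g)))‖ := by
        rw [norm_smul, norm_inv, Real.norm_natCast]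
    _ ≤ ((FN.card : ℝ))⁻¹ * ∑ _h ∈ FN, (η * ‖x‖) :=
        mul_le_mul_of_nonneg_left (norm_sum_le_of_le _ key) (inv_nonneg.2 hn.le)
    _ = η * ‖x‖ := by
        rw [Finset.sum_const, nsmul_eq_mul]
        field_simp
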